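/- Let (X_n, A_n)_{n∈ℕ} be measurable spaces and (κ_n : ∏_{i≤n} X_i ⇝ X_{n+1})_{n∈ℕ} Markov kernels. For a ≤ b ≤ c in ℕ and every measurable function f : ∏_{n∈ℕ} X_n → [0,∞], integrating the partial marginal of f between b and c against η_{a,b} gives the partial marginal of f between a and c: lmarginal_{a,b}(lmarginal_{b,c} f) = lmarginal_{a,c} f. -/
import Mathlib


open MeasureTheory ProbabilityTheory Preorder Filter
open scoped ENNReal ProbabilityTheory Topology

variable {X : ℕ → Type*} [∀ n, MeasurableSpace (X n)]

/-- Canonical map gluing a trajectory up to time `b` with a point of `X (b + 1)` into a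
trajectory up to time `b + 1`. -/
def IicProdSucc (b : ℕ) (p : (Π i : Finset.Iic b, X i) × X (b + 1)) :
    Π i : Finset.Iic (b + 1), X i :=
  fun i ↦ if h : i.1 ≤ b then p.1 ⟨i.1, Finset.mem_Iic.2 h⟩
    else cast (congrArg X (Nat.le_antisymm (Finset.mem_Iic.1 i.2)
      (Nat.lt_of_not_le h))).symm p.2

/-- The partial trajectory kernel `η_{a,b}` built from the kernels `κ n`: for `b ≤ a` it is the
deterministic kernel given by the restriction map, and `η_{a,b+1}` is obtained from `η_{a,b}` by
composing with the product of the identity kernel and `κ b`. -/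
noncomputable def partialTraj (κ : ∀ n, Kernel (Π i : Finset.Iic n, X i) (X (n + 1))) (a : ℕ) :
    (b : ℕ) → Kernel (Π i : Finset.Iic a, X i) (Π i : Finset.Iic b, X i)
  | 0 => Kernel.deterministic (frestrictLe₂ (Nat.zero_le a)) (measurable_frestrictLe₂ _)
  | b + 1 =>
    if h : b + 1 ≤ a then Kernel.deterministic (frestrictLe₂ h) (measurable_frestrictLe₂ h)
    else ((Kernel.id ×ₖ κ b) ∘ₖ partialTraj κ a b).map (IicProdSucc b)

/-- Integration of a function `f : (Π n, X n) → ℝ≥0∞` against the partial trajectory kernel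
`η_{a,b}`: the coordinates up to `b` are integrated out, the others are kept fixed. -/
noncomputable def lmarginalPartialTraj (κ : ∀ n, Kernel (Π i : Finset.Iic n, X i) (X (n + 1)))
    (a b : ℕ) (f : (Π n, X n) → ℝ≥0∞) (x : Π n, X n) : ℝ≥0∞ :=
  ∫⁻ y : Π i : Finset.Iic b, X i,
    f (fun n ↦ if h : n ≤ b then y ⟨n, Finset.mem_Iic.2 h⟩ else x n)
    ∂(partialTraj κ a b (frestrictLe a x))

lemma measurable_IicProdSucc (b : ℕ) : Measurable (IicProdSucc (X := X) b) := by
  refine measurable_pi_lambda _ fun i ↦ ?_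
  obtain ⟨j, hj⟩ := i
  unfold IicProdSucc
  by_cases h : j ≤ b
  · simp only [h, dif_pos]
    exact (measurable_pi_apply _).comp measurable_fst
  · simp only [h, dif_neg, not_false_iff]
    have hjb : j = b + 1 := Nat.le_antisymm (Finset.mem_Iic.1 hj) (Nat.lt_of_not_le h)
    subst hjb
    simpa using measurable_snd

instance instIsMarkovKernelPartialTraj (κ : ∀ n, Kernel (Π i : Finset.Iic n, X i) (X (n + 1)))
    [∀ n, IsMarkovKernel (κ n)] (a b : ℕ) : IsMarkovKernel (partialTraj κ a b) := by
  induction b with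
  | zero => rw [partialTraj]; infer_instance
  | succ b ih =>
    rw [partialTraj]
    split
    · infer_instance
    · exact Kernel.IsMarkovKernel.map _ (measurable_IicProdSucc b)

lemma partialTraj_self (κ : ∀ n, Kernel (Π i : Finset.Iic n, X i) (X (n + 1))) (b : ℕ) :
    partialTraj κ b b = Kernel.id := by
  have hid : (frestrictLe₂ (π := X) (Nat.le_refl b)) = id := by
    funext x i; rfl
  cases b with
  | zero =>
    rw [partialTraj]
    simp_rw [hid]
    rfl
  | succ b =>
    rw [partialTraj, dif_pos (Nat.le_refl _)]
    simp_rw [hid]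
    rfl

lemma partialTraj_comp (κ : ∀ n, Kernel (Π i : Finset.Iic n, X i) (X (n + 1)))
    [∀ n, IsMarkovKernel (κ n)] {a b : ℕ} (hab : a ≤ b) :
    ∀ {c}, b ≤ c → partialTraj κ b c ∘ₖ partialTraj κ a b = partialTraj κ a c := by
  intro c hbc
  induction c, hbc using Nat.le_induction with
  | base => rw [partialTraj_self, Kernel.id_comp]
  | succ c hbc ih =>
    have h1 : ¬ c + 1 ≤ b := by omega
    have h2 : ¬ c + 1 ≤ a := by omega
    rw [partialTraj, dif_neg h1, partialTraj, dif_neg h2, ← Kernel.map_comp,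
      Kernel.comp_assoc, ih]

/-- For `a ≤ b ≤ c`, integrating the partial marginal of `f` between `b` and `c` against
`η_{a,b}` gives the partial marginal of `f` between `a` and `c`. -/
theorem lmarginalPartialTraj_self (κ : ∀ n, Kernel (Π i : Finset.Iic n, X i) (X (n + 1)))
    [∀ n, IsMarkovKernel (κ n)] {a b c : ℕ} (hab : a ≤ b) (hbc : b ≤ c)
    {f : (Π n, X n) → ℝ≥0∞} (hf : Measurable f) :
    lmarginalPartialTraj κ a b (lmarginalPartialTraj κ b c f) = lmarginalPartialTraj κ a c f := by
  funext x
  have hg : Measurable fun w : Π i : Finset.Iic c, X i ↦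
      f (fun n ↦ if h : n ≤ c then w ⟨n, Finset.mem_Iic.2 h⟩ else x n) := by
    refine hf.comp (measurable_pi_lambda _ fun n ↦ ?_)
    by_cases h : n ≤ c
    · simp only [h, dif_pos]
      exact measurable_pi_apply _
    · simp only [h, dif_neg, not_false_iff]
      exact measurable_const
  have key : ∀ y : Π i : Finset.Iic b, X i,
      lmarginalPartialTraj κ b c f
        (fun n ↦ if h : n ≤ b then y ⟨n, Finset.mem_Iic.2 h⟩ else x n)
      = ∫⁻ w, f (fun n ↦ if h : n ≤ c then w ⟨n, Finset.mem_Iic.2 h⟩ else x n)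
          ∂(partialTraj κ b c y) := by
    intro y
    rw [lmarginalPartialTraj]
    have hres : frestrictLe b (fun n ↦ if h : n ≤ b then y ⟨n, Finset.mem_Iic.2 h⟩ else x n)
        = y := by
      funext i
      simp [frestrictLe, Finset.restrict, Finset.mem_Iic.1 i.2]
    rw [hres]
    refine lintegral_congr fun w ↦ ?_
    congr 1
    funext n
    by_cases h : n ≤ c
    · simp [h]
    · have hb : ¬ n ≤ b := fun hnb ↦ h (hnb.trans hbc)
      simp [h, hb]
  rw [lmarginalPartialTraj]
  simp_rw [key]
  rw [← Kernel.lintegral_comp _ _ _ hg, partialTraj_comp κ hab hbc, lmarginalPartialTraj]
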